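/- arXiv:2201.12247 — 9 statements merged into one kernel-verified Lean document; each statement's English description precedes it below -/
import Mathlib

section
/- Let F : ℝ^d → ℝ^d be L-Lipschitz with L > 0 and have a weak Minty solution u* with parameter ρ > 0 satisfying ρ < 1/L. Let (u_k)_{k≥0} be the OGDA+ iterates with step size a and parameter γ satisfying 0 < γ ≤ 1, a > ρ and a·L ≤ (1 − γ)/(1 + γ). Then for every k ≥ 1, min_{0 ≤ i ≤ k−1} ‖F(u_i)‖² ≤ (1/(k·a·γ·(a − ρ)))·‖u₀ + a·F(u₀) − u*‖². -/
open scoped RealInnerProductSpace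

lemma ogda_key (β γ X y Z w : ℝ) (hγ0 : 0 < γ) (hγ1 : γ < 1) (hβ0 : 0 ≤ β)
    (hβ : β * (1 + γ) ≤ 1 - γ) (hX : 0 ≤ X) (hy : 0 ≤ y) (hZ : 0 ≤ Z) (hw0 : 0 ≤ w)
    (hw : w ≤ β * (γ * Z + y)) (hZX : Z ≤ X + y) :
    γ * (1 - γ) * (γ * Z ^ 2 + y ^ 2 - X ^ 2) + (1 + γ) * (w ^ 2 - y ^ 2) ≤ 0 := by
  have h1γ : (0:ℝ) < 1 + γ := by linarith
  have hw2 : w ^ 2 ≤ β ^ 2 * (γ * Z + y) ^ 2 := by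
    nlinarith [sq_nonneg (β * (γ * Z + y) - w), le_trans hw0 hw]
  have hβ2 : β ^ 2 * (1 + γ) ^ 2 ≤ (1 - γ) ^ 2 := by
    nlinarith [mul_nonneg hβ0 h1γ.le]
  have hZ2 : Z ^ 2 ≤ (X + y) ^ 2 := by nlinarith
  have h3 : (γ * Z + y) ^ 2 ≤ (γ * (X + y) + y) ^ 2 := by
    nlinarith [mul_nonneg (mul_nonneg hγ0.le (sub_nonneg.mpr hZX)) (by positivity : (0:ℝ) ≤ γ * (X + y) + γ * Z + 2 * y)]
  have h4 : β ^ 2 * (γ * Z + y) ^ 2 ≤ β ^ 2 * (γ * (X + y) + y) ^ 2 :=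
    mul_le_mul_of_nonneg_left h3 (sq_nonneg β)
  have h5 : β ^ 2 * (1 + γ) ^ 2 * (γ * (X + y) + y) ^ 2
      ≤ (1 - γ) ^ 2 * (γ * (X + y) + y) ^ 2 :=
    mul_le_mul_of_nonneg_right hβ2 (sq_nonneg _)
  have h6 : γ * (1 - γ) * γ * Z ^ 2 ≤ γ * (1 - γ) * γ * (X + y) ^ 2 :=
    mul_le_mul_of_nonneg_left hZ2 (mul_nonneg (mul_nonneg hγ0.le (by linarith)) hγ0.le)
  have hid : (1 + γ) * (γ * (1 - γ) * (γ * (X + y) ^ 2 + y ^ 2 - X ^ 2) - (1 + γ) * y ^ 2)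
      + (1 - γ) ^ 2 * (γ * (X + y) + y) ^ 2
      = -(γ * ((1 - γ) * X - (1 + γ) * y) ^ 2) := by ring
  have hsq : 0 ≤ γ * ((1 - γ) * X - (1 + γ) * y) ^ 2 := by positivity
  have goal' : (1 + γ) * (γ * (1 - γ) * (γ * Z ^ 2 + y ^ 2 - X ^ 2) + (1 + γ) * (w ^ 2 - y ^ 2)) ≤ 0 := by
    nlinarith [mul_le_mul_of_nonneg_left hw2 h1γ.le, mul_le_mul_of_nonneg_left h4 h1γ.le]
  have h7 : (1 + γ) * (γ * (1 - γ) * (γ * Z ^ 2 + y ^ 2 - X ^ 2) + (1 + γ) * (w ^ 2 - y ^ 2)) ≤ (1 + γ) * 0 := by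
    linarith
  exact le_of_mul_le_mul_left h7 h1γ

set_option maxHeartbeats 1000000 in
theorem ogda_plus_weak_minty (d : ℕ)
    (F : EuclideanSpace ℝ (Fin d) → EuclideanSpace ℝ (Fin d))
    (L ρ a γ : ℝ) (ustar : EuclideanSpace ℝ (Fin d))
    (hL : 0 < L) (hLip : ∀ u v, ‖F u - F v‖ ≤ L * ‖u - v‖)
    (hρ : 0 < ρ)
    (hweak : ∀ u, ⟪F u, u - ustar⟫ ≥ -(ρ / 2) * ‖F u‖ ^ 2)
    (hρL : ρ < 1 / L)
    (hγ0 : 0 < γ) (hγ1 : γ ≤ 1) (haρ : ρ < a)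
    (hstep : a * L ≤ (1 - γ) / (1 + γ))
    (u : ℕ → EuclideanSpace ℝ (Fin d))
    (hupd : ∀ k : ℕ, u (k + 1) = u k - a • ((1 + γ) • F (u k) - F (u (k - 1))))
    (k : ℕ) (hk : 1 ≤ k) :
    (Finset.range k).inf' (Finset.nonempty_range_iff.mpr (by omega))
        (fun i => ‖F (u i)‖ ^ 2)
      ≤ (1 / (k * a * γ * (a - ρ))) * ‖u 0 + a • F (u 0) - ustar‖ ^ 2 := by
  have ha : 0 < a := hρ.trans haρ
  have h1γ : (0:ℝ) < 1 + γ := by linarith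
  -- γ = 1 is impossible
  rcases lt_or_eq_of_le hγ1 with hγlt | hγeq
  swap
  · exfalso
    have hβpos : 0 < a * L := mul_pos ha hL
    rw [hγeq] at hstep
    norm_num at hstep
    linarith
  have hβ : (a * L) * (1 + γ) ≤ 1 - γ := (le_div_iff₀ h1γ).mp hstep
  have hβ0 : 0 ≤ a * L := (mul_pos ha hL).le
  set g : ℕ → ℝ := fun i => ‖F (u i)‖ with hgdef
  set D : ℕ → ℝ := fun i => ‖F (u i) - F (u (i - 1))‖ with hDdef
  set z : ℕ → EuclideanSpace ℝ (Fin d) := fun i => u i + a • F (u (i - 1)) with hzdef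
  have hz : ∀ i : ℕ, z (i + 1) = z i - (a * γ) • F (u i) := by
    intro i
    simp only [hzdef, Nat.add_sub_cancel, hupd i]
    module
  have hD0 : D 0 = 0 := by simp [hDdef]
  have hDrec : ∀ i : ℕ, D (i + 1) ≤ (a * L) * (γ * g i + D i) := by
    intro i
    have hu : u (i + 1) - u i = -(a • ((1 + γ) • F (u i) - F (u (i - 1)))) := by
      rw [hupd i]; abel
    have h1 : ‖F (u (i + 1)) - F (u i)‖ ≤ L * ‖u (i + 1) - u i‖ := hLip _ _
    rw [hu, norm_neg, norm_smul, Real.norm_eq_abs, abs_of_pos ha] at h1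
    have h2 : ‖(1 + γ) • F (u i) - F (u (i - 1))‖ ≤ γ * g i + D i := by
      have he : (1 + γ) • F (u i) - F (u (i - 1))
          = γ • F (u i) + (F (u i) - F (u (i - 1))) := by module
      rw [he]
      refine (norm_add_le _ _).trans ?_
      rw [norm_smul, Real.norm_eq_abs, abs_of_pos hγ0]
    calc D (i + 1) = ‖F (u (i + 1)) - F (u i)‖ := by simp [hDdef]
      _ ≤ L * (a * ‖(1 + γ) • F (u i) - F (u (i - 1))‖) := h1
      _ ≤ L * (a * (γ * g i + D i)) :=
          mul_le_mul_of_nonneg_left (mul_le_mul_of_nonneg_left h2 ha.le) hL.le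
      _ = (a * L) * (γ * g i + D i) := by ring
  have hgX : ∀ i : ℕ, g i ≤ ‖F (u (i - 1))‖ + D i := by
    intro i
    calc g i = ‖F (u (i - 1)) + (F (u i) - F (u (i - 1)))‖ := by
          simp [hgdef]
      _ ≤ ‖F (u (i - 1))‖ + ‖F (u i) - F (u (i - 1))‖ := norm_add_le _ _
      _ = ‖F (u (i - 1))‖ + D i := rfl
  -- per-step descent
  have hstepmain : ∀ i : ℕ,
      (1 - γ) * ‖z (i + 1) - ustar‖ ^ 2 + a ^ 2 * (1 + γ) * D (i + 1) ^ 2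
        + (1 - γ) * (a * γ * (a - ρ)) * g i ^ 2
      ≤ (1 - γ) * ‖z i - ustar‖ ^ 2 + a ^ 2 * (1 + γ) * D i ^ 2 := by
    intro i
    set X : ℝ := ‖F (u (i - 1))‖ with hXdef
    have hzz : z (i + 1) - ustar = (z i - ustar) - (a * γ) • F (u i) := by
      rw [hz i]; abel
    have E1 : ‖z (i + 1) - ustar‖ ^ 2
        = ‖z i - ustar‖ ^ 2 - 2 * (a * γ) * ⟪F (u i), z i - ustar⟫
          + (a * γ) ^ 2 * g i ^ 2 := by
      rw [hzz, @norm_sub_sq_real, real_inner_smul_right, real_inner_comm,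
        norm_smul, Real.norm_eq_abs, mul_pow, sq_abs]
      simp only [hgdef]
      ring
    have E2 : ⟪F (u i), z i - ustar⟫
        = ⟪F (u i), u i - ustar⟫ + a * ⟪F (u i), F (u (i - 1))⟫ := by
      have he : z i - ustar = (u i - ustar) + a • F (u (i - 1)) := by
        simp only [hzdef]; abel
      rw [he, inner_add_right, real_inner_smul_right]
    have E3 : ⟪F (u i), u i - ustar⟫ ≥ -(ρ / 2) * g i ^ 2 := hweak (u i)
    have E4 : D i ^ 2 = g i ^ 2 - 2 * ⟪F (u i), F (u (i - 1))⟫ + X ^ 2 := by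
      simp only [hDdef, hgdef, hXdef]
      exact @norm_sub_sq_real _ _ _ _ _
    have E5 : γ * (1 - γ) * (γ * g i ^ 2 + D i ^ 2 - X ^ 2)
        + (1 + γ) * (D (i + 1) ^ 2 - D i ^ 2) ≤ 0 :=
      ogda_key (a * L) γ X (D i) (g i) (D (i + 1)) hγ0 hγlt hβ0 hβ
        (norm_nonneg _) (norm_nonneg _) (norm_nonneg _) (norm_nonneg _)
        (hDrec i) (hgX i)
    -- scaled versions
    have Q1 : (1 - γ) * ‖z (i + 1) - ustar‖ ^ 2
        = (1 - γ) * ‖z i - ustar‖ ^ 2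
          - 2 * (a * γ) * (1 - γ) * ⟪F (u i), u i - ustar⟫
          - a ^ 2 * γ * (1 - γ) * (g i ^ 2 + X ^ 2 - D i ^ 2)
          + (a * γ) ^ 2 * (1 - γ) * g i ^ 2 := by
      rw [E2] at E1
      linear_combination (1 - γ) * E1 - (a ^ 2 * γ * (1 - γ)) * E4
    have P1 : -(2 * (a * γ) * (1 - γ)) * ⟪F (u i), u i - ustar⟫
        ≤ a * γ * (1 - γ) * ρ * g i ^ 2 := by
      have hc : (0:ℝ) ≤ 2 * (a * γ) * (1 - γ) := by
        have : (0:ℝ) < 1 - γ := by linarith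
        positivity
      have := mul_le_mul_of_nonneg_left E3 hc
      nlinarith [this]
    have E5s : a ^ 2 * (γ * (1 - γ) * (γ * g i ^ 2 + D i ^ 2 - X ^ 2)
        + (1 + γ) * (D (i + 1) ^ 2 - D i ^ 2)) ≤ 0 := by
      have := mul_le_mul_of_nonneg_left E5 (sq_nonneg a)
      simpa using this
    nlinarith [Q1, P1, E5s]
  -- telescoping
  set c : ℝ := (1 - γ) * (a * γ * (a - ρ)) with hcdef
  have hmain : ∀ n : ℕ,
      (1 - γ) * ‖z n - ustar‖ ^ 2 + a ^ 2 * (1 + γ) * D n ^ 2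
        + c * ∑ i ∈ Finset.range n, g i ^ 2
      ≤ (1 - γ) * ‖z 0 - ustar‖ ^ 2 := by
    intro n
    induction n with
    | zero => simp [hD0]
    | succ n ih =>
      rw [Finset.sum_range_succ]
      have := hstepmain n
      linarith
  -- conclude
  have hz0 : z 0 = u 0 + a • F (u 0) := rfl
  set m : ℝ := (Finset.range k).inf' (Finset.nonempty_range_iff.mpr (by omega))
      (fun i => ‖F (u i)‖ ^ 2) with hmdef
  have hmle : ∀ i ∈ Finset.range k, m ≤ g i ^ 2 := by
    intro i hi
    exact Finset.inf'_le _ hi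
  have hsum : (k : ℝ) * m ≤ ∑ i ∈ Finset.range k, g i ^ 2 := by
    have := Finset.card_nsmul_le_sum (Finset.range k) (fun i => g i ^ 2) m hmle
    simpa [Finset.card_range, nsmul_eq_mul] using this
  have hkey : c * ((k : ℝ) * m) ≤ (1 - γ) * ‖z 0 - ustar‖ ^ 2 := by
    have h1 := hmain k
    have h2 : 0 ≤ (1 - γ) * ‖z k - ustar‖ ^ 2 + a ^ 2 * (1 + γ) * D k ^ 2 := by
      have : (0:ℝ) < 1 - γ := by linarith
      positivity
    have hc0 : 0 < c := by
      rw [hcdef]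
      exact mul_pos (by linarith) (mul_pos (mul_pos ha hγ0) (by linarith))
    nlinarith [mul_le_mul_of_nonneg_left hsum hc0.le]
  have hc' : (0:ℝ) < (k : ℝ) * a * γ * (a - ρ) := by
    have hk' : (0:ℝ) < (k : ℝ) := by exact_mod_cast Nat.pos_of_ne_zero (by omega)
    exact mul_pos (mul_pos (mul_pos hk' ha) hγ0) (by linarith)
  rw [hz0] at hkey
  rw [hcdef] at hkey
  have hfin : m * ((k : ℝ) * a * γ * (a - ρ)) ≤ ‖u 0 + a • F (u 0) - ustar‖ ^ 2 := by
    have h1γ' : (0:ℝ) < 1 - γ := by linarith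
    have h8 : (1 - γ) * ((a * γ * (a - ρ)) * ((k : ℝ) * m))
        ≤ (1 - γ) * ‖u 0 + a • F (u 0) - ustar‖ ^ 2 := by
      nlinarith [hkey]
    have h9 := le_of_mul_le_mul_left h8 h1γ'
    nlinarith [h9]
  rw [one_div, inv_mul_eq_div, le_div_iff₀ hc']
  linarith [hfin]
end

section
/- Let F : ℝ^d → ℝ^d be L-Lipschitz with L > 0 and have a weak Minty solution u* with parameter ρ > 0. Let 0 < γ ≤ 1, 0 ≤ λ ≤ 2/γ, and let (u_k)_{k≥0} be the OGDA+ iterates with step size a > 0 satisfying a·λ·γ > ρ and a·L ≤ (2 − λ·γ − γ)/(2 − λ·γ + γ). Then for every k ≥ 1, (1/k)·Σ_{i=0}^{k−1} ‖F(u_i)‖² ≤ (1/(k·a·γ·(a·λ·γ − ρ)))·‖u₀ + a·F(u₀) − u*‖². -/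
open scoped RealInnerProductSpace

lemma ogda_scal_aux (c g m dd ee : ℝ) (hc : 0 < c) (hg : 0 < g)
    (hmg : 0 < m + 2*g) (key : c*(m+2*g) ≤ m) (hd : 0 ≤ dd) (he : 0 ≤ ee) :
    c^2*(g*dd+ee)^2 + 2*c*g*dd*ee ≤ c*g*m*dd^2 + ee^2 := by
  have hm : 0 < m := lt_of_lt_of_le (mul_pos hc hmg) key
  have h1 : 0 ≤ m*(1-c) - 2*c*g := by nlinarith
  have hA : 0 < m - c*g := by nlinarith [mul_nonneg hc.le hm.le]
  nlinarith [sq_nonneg (2*(c*g*(m-c*g))*dd - 2*c*g*(1+c)*ee),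
    mul_nonneg (mul_nonneg (mul_pos hc hg).le h1) (sq_nonneg ee),
    mul_pos (mul_pos hc hg) hA, sq_nonneg ee, sq_nonneg dd,
    mul_nonneg hd he]

theorem ogda_plus_generalized (d : ℕ)
    (F : EuclideanSpace ℝ (Fin d) → EuclideanSpace ℝ (Fin d))
    (L ρ a γ lam : ℝ) (ustar : EuclideanSpace ℝ (Fin d))
    (hL : 0 < L) (hLip : ∀ u v, ‖F u - F v‖ ≤ L * ‖u - v‖)
    (hρ : 0 < ρ)
    (hweak : ∀ u, ⟪F u, u - ustar⟫ ≥ -(ρ / 2) * ‖F u‖ ^ 2)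
    (hγ0 : 0 < γ) (hγ1 : γ ≤ 1)
    (hlam0 : 0 ≤ lam) (hlam2 : lam ≤ 2 / γ)
    (ha : 0 < a) (haρ : ρ < a * lam * γ)
    (hstep : a * L ≤ (2 - lam * γ - γ) / (2 - lam * γ + γ))
    (u : ℕ → EuclideanSpace ℝ (Fin d))
    (hupd : ∀ k : ℕ, u (k + 1) = u k - a • ((1 + γ) • F (u k) - F (u (k - 1))))
    (k : ℕ) (hk : 1 ≤ k) :
    (1 / k) * ∑ i ∈ Finset.range k, ‖F (u i)‖ ^ 2
      ≤ (1 / (k * a * γ * (a * lam * γ - ρ))) * ‖u 0 + a • F (u 0) - ustar‖ ^ 2 := by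
  have hlamγ : lam * γ ≤ 2 := by
    have := (le_div_iff₀ hγ0).mp hlam2
    linarith
  have hmg : (0:ℝ) < (2 - lam*γ - γ) + 2*γ := by nlinarith
  have haL : 0 < a * L := mul_pos ha hL
  have key : (a*L) * ((2 - lam*γ - γ) + 2*γ) ≤ 2 - lam*γ - γ := by
    have h2 : (2 - lam * γ + γ) = (2 - lam*γ - γ) + 2*γ := by ring
    have := (le_div_iff₀ (by nlinarith : (0:ℝ) < 2 - lam*γ + γ)).mp hstep
    linarith [this]
  -- the auxiliary sequence z
  set z : ℕ → EuclideanSpace ℝ (Fin d) := fun i => u i + a • F (u (i - 1)) with hzdef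
  have hz : ∀ i : ℕ, z (i+1) = z i - (a*γ) • F (u i) := by
    intro i
    simp only [hzdef, Nat.add_sub_cancel]
    rw [hupd i]
    module
  -- Lyapunov function
  set V : ℕ → ℝ := fun i => L*‖z i - ustar‖^2 + a*‖F (u i) - F (u (i-1))‖^2 with hVdef
  have hstepV : ∀ i : ℕ,
      V (i+1) + L*(a*γ*(a*lam*γ - ρ))*‖F (u i)‖^2 ≤ V i := by
    intro i
    have hd : (0:ℝ) ≤ ‖F (u i)‖ := norm_nonneg _
    have he : (0:ℝ) ≤ ‖F (u i) - F (u (i-1))‖ := norm_nonneg _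
    -- inner product expansion
    have hzi : z i - ustar = (u i - ustar) + a • F (u (i-1)) := by
      simp only [hzdef]; abel
    have h2 : ⟪z i - ustar, F (u i)⟫
        = ⟪F (u i), u i - ustar⟫
          + a*(‖F (u i)‖^2 - ⟪F (u i), F (u i) - F (u (i-1))⟫) := by
      rw [hzi]
      simp only [inner_add_left, inner_add_right, real_inner_smul_left,
        real_inner_smul_right, inner_sub_right, inner_sub_left,
        real_inner_self_eq_norm_sq, real_inner_comm (F (u i))]
      ring
    have h12 : ‖z (i+1) - ustar‖^2
        = ‖z i - ustar‖^2
          - 2*(a*γ)*(⟪F (u i), u i - ustar⟫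
            + a*(‖F (u i)‖^2 - ⟪F (u i), F (u i) - F (u (i-1))⟫))
          + (a*γ)^2*‖F (u i)‖^2 := by
      rw [show z (i+1) - ustar = (z i - ustar) - (a*γ) • F (u i) by rw [hz i]; abel]
      rw [norm_sub_sq_real, real_inner_smul_right, norm_smul, mul_pow,
        Real.norm_eq_abs, sq_abs, h2]
      ring
    have F1 : L*‖z (i+1) - ustar‖^2
        = L*(‖z i - ustar‖^2
          - 2*(a*γ)*(⟪F (u i), u i - ustar⟫
            + a*(‖F (u i)‖^2 - ⟪F (u i), F (u i) - F (u (i-1))⟫))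
          + (a*γ)^2*‖F (u i)‖^2) := by rw [h12]
    have F3 : (2*a*γ*L)*(-(ρ/2)*‖F (u i)‖^2) ≤ (2*a*γ*L)*⟪F (u i), u i - ustar⟫ :=
      mul_le_mul_of_nonneg_left (hweak (u i)) (by positivity)
    have F4 : (2*a^2*γ*L)*⟪F (u i), F (u i) - F (u (i-1))⟫
        ≤ (2*a^2*γ*L)*(‖F (u i)‖*‖F (u i) - F (u (i-1))‖) :=
      mul_le_mul_of_nonneg_left (real_inner_le_norm _ _) (by positivity)
    have h5 : ‖F (u (i+1)) - F (u i)‖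
        ≤ (a*L)*(γ*‖F (u i)‖ + ‖F (u i) - F (u (i-1))‖) := by
      calc ‖F (u (i+1)) - F (u i)‖ ≤ L * ‖u (i+1) - u i‖ := hLip _ _
        _ = L * ‖a • ((1+γ) • F (u i) - F (u (i-1)))‖ := by
            rw [show u (i+1) - u i = -(a • ((1+γ) • F (u i) - F (u (i-1)))) by
              rw [hupd i]; abel, norm_neg]
        _ = (a*L) * ‖γ • F (u i) + (F (u i) - F (u (i-1)))‖ := by
            rw [show (1+γ) • F (u i) - F (u (i-1))
              = γ • F (u i) + (F (u i) - F (u (i-1))) by module]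
            rw [norm_smul, Real.norm_eq_abs, abs_of_pos ha]; ring
        _ ≤ (a*L)*(γ*‖F (u i)‖ + ‖F (u i) - F (u (i-1))‖) := by
            have := norm_add_le (γ • F (u i)) (F (u i) - F (u (i-1)))
            rw [norm_smul, Real.norm_eq_abs, abs_of_pos hγ0] at this
            exact mul_le_mul_of_nonneg_left this haL.le
    have F5 : a*‖F (u (i+1)) - F (u i)‖^2
        ≤ a*((a*L)*(γ*‖F (u i)‖ + ‖F (u i) - F (u (i-1))‖))^2 :=
      mul_le_mul_of_nonneg_left (pow_le_pow_left₀ (norm_nonneg _) h5 2) ha.le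
    have F6 : a*((a*L)^2*(γ*‖F (u i)‖ + ‖F (u i) - F (u (i-1))‖)^2
          + 2*(a*L)*γ*‖F (u i)‖*‖F (u i) - F (u (i-1))‖)
        ≤ a*((a*L)*γ*(2 - lam*γ - γ)*‖F (u i)‖^2 + ‖F (u i) - F (u (i-1))‖^2) :=
      mul_le_mul_of_nonneg_left
        (ogda_scal_aux (a*L) γ (2 - lam*γ - γ) _ _ haL hγ0 hmg key hd he) ha.le
    simp only [hVdef, Nat.add_sub_cancel]
    set_option maxHeartbeats 1000000 in
    linarith [F1, F3, F4, F5, F6]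
  -- telescoping
  have hsum : ∀ n : ℕ,
      L*(a*γ*(a*lam*γ - ρ)) * ∑ i ∈ Finset.range n, ‖F (u i)‖^2 + V n ≤ V 0 := by
    intro n
    induction n with
    | zero => simp
    | succ n ih =>
        rw [Finset.sum_range_succ]
        have := hstepV n
        have hnn : 0 ≤ L*(a*γ*(a*lam*γ - ρ)) ∨ True := Or.inr trivial
        linarith [this, ih]
  have hVnonneg : 0 ≤ V k := by
    simp only [hVdef]; positivity
  have hV0 : V 0 = L*‖u 0 + a • F (u 0) - ustar‖^2 := by
    simp only [hVdef, hzdef]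
    norm_num
  have hC : 0 < a*γ*(a*lam*γ - ρ) := by
    have : 0 < a*lam*γ - ρ := by linarith
    positivity
  have hS : (a*γ*(a*lam*γ - ρ)) * ∑ i ∈ Finset.range k, ‖F (u i)‖^2
      ≤ ‖u 0 + a • F (u 0) - ustar‖^2 := by
    have h := hsum k
    rw [hV0] at h
    have h' : L*((a*γ*(a*lam*γ - ρ)) * ∑ i ∈ Finset.range k, ‖F (u i)‖^2)
        ≤ L*‖u 0 + a • F (u 0) - ustar‖^2 := by linarith [h, hVnonneg]
    exact le_of_mul_le_mul_left h' hL
  have hk' : (0:ℝ) < (k:ℝ) := by exact_mod_cast hk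
  have hrw : ((k:ℝ) * a * γ * (a*lam*γ - ρ)) = (k:ℝ) * (a*γ*(a*lam*γ - ρ)) := by ring
  rw [hrw]
  rw [one_div, one_div, mul_inv]
  calc (k:ℝ)⁻¹ * ∑ i ∈ Finset.range k, ‖F (u i)‖^2
      = (k:ℝ)⁻¹ * ((a*γ*(a*lam*γ - ρ))⁻¹ *
          ((a*γ*(a*lam*γ - ρ)) * ∑ i ∈ Finset.range k, ‖F (u i)‖^2)) := by
        rw [inv_mul_cancel_left₀ (ne_of_gt hC)]
    _ ≤ (k:ℝ)⁻¹ * ((a*γ*(a*lam*γ - ρ))⁻¹ * ‖u 0 + a • F (u 0) - ustar‖^2) :=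
        mul_le_mul_of_nonneg_left
          (mul_le_mul_of_nonneg_left hS (inv_nonneg.mpr hC.le))
          (inv_nonneg.mpr hk'.le)
    _ = (k:ℝ)⁻¹ * (a*γ*(a*lam*γ - ρ))⁻¹ * ‖u 0 + a • F (u 0) - ustar‖^2 := by ring
end

section
/- Let F : ℝ^d → ℝ^d be monotone and L-Lipschitz with L > 0, and let u* ∈ ℝ^d satisfy F(u*) = 0. Let 0 < γ ≤ 1 and ε > 0 with ε < (2 − γ)/(2 + γ), and let (u_k)_{k≥0} be the OGDA+ iterates with step size a > 0 satisfying a·L = (2 − γ)/(2 + γ) − ε. Then for every k ≥ 1, (1/k)·Σ_{i=0}^{k−1} ‖F(u_i)‖² ≤ (2/(k·a²·γ²·ε))·‖u₀ + a·F(u₀) − u*‖². -/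
open scoped RealInnerProductSpace

private lemma ogda_sq_identity {d : ℕ} (γ : ℝ) (hγ : 0 < 1 + γ)
    (x y : EuclideanSpace ℝ (Fin d)) :
    ‖(1 + γ) • x - y‖ ^ 2
      = (1 + γ) * ‖x - y‖ ^ 2 + γ * (1 + γ) * ‖x‖ ^ 2 - γ * ‖y‖ ^ 2 := by
  have h1 : ‖(1 + γ) • x - y‖ ^ 2 = ‖(1 + γ) • x‖ ^ 2 - 2 * ⟪(1 + γ) • x, y⟫ + ‖y‖ ^ 2 :=
    norm_sub_sq_real _ _
  have h2 : ‖x - y‖ ^ 2 = ‖x‖ ^ 2 - 2 * ⟪x, y⟫ + ‖y‖ ^ 2 := norm_sub_sq_real _ _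
  have h3 : ‖(1 + γ) • x‖ = (1 + γ) * ‖x‖ := by
    rw [norm_smul, Real.norm_eq_abs, abs_of_pos hγ]
  have h4 : ⟪(1 + γ) • x, y⟫ = (1 + γ) * ⟪x, y⟫ := real_inner_smul_left x y (1 + γ)
  rw [h1, h3, h4, h2]; ring

set_option maxHeartbeats 1000000 in
theorem ogda_plus_monotone (d : ℕ)
    (F : EuclideanSpace ℝ (Fin d) → EuclideanSpace ℝ (Fin d))
    (L a γ ε : ℝ) (ustar : EuclideanSpace ℝ (Fin d))
    (hL : 0 < L) (hLip : ∀ u v, ‖F u - F v‖ ≤ L * ‖u - v‖)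
    (hMono : ∀ u v, ⟪F u - F v, u - v⟫ ≥ 0)
    (hsol : F ustar = 0)
    (hγ0 : 0 < γ) (hγ1 : γ ≤ 1)
    (hε0 : 0 < ε) (hε1 : ε < (2 - γ) / (2 + γ))
    (ha : 0 < a) (hstep : a * L = (2 - γ) / (2 + γ) - ε)
    (u : ℕ → EuclideanSpace ℝ (Fin d))
    (hupd : ∀ k : ℕ, u (k + 1) = u k - a • ((1 + γ) • F (u k) - F (u (k - 1))))
    (k : ℕ) (hk : 1 ≤ k) :
    (1 / k) * ∑ i ∈ Finset.range k, ‖F (u i)‖ ^ 2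
      ≤ (2 / (k * a ^ 2 * γ ^ 2 * ε)) * ‖u 0 + a • F (u 0) - ustar‖ ^ 2 := by
  have hs : (0:ℝ) < 2 + γ := by linarith
  set c : ℝ := a * L with hc
  have hc0 : 0 < c := mul_pos ha hL
  have hεs : ε * (2 + γ) < 2 - γ := by
    have h := (lt_div_iff₀ hs).mp hε1
    linarith
  have hεs0 : 0 < ε * (2 + γ) := mul_pos hε0 hs
  have hcs : c * (2 + γ) = 2 - γ - ε * (2 + γ) := by
    rw [hstep]; field_simp
  -- numeric fact (N2)
  have hN2 : (1 + γ) * c ^ 2 < 1 := by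
    have key : (1 + γ) * (2 - γ - ε * (2 + γ)) ^ 2 < (2 + γ) ^ 2 := by
      nlinarith [mul_pos hεs0 (by linarith : (0:ℝ) < 2 - γ - ε * (2 + γ)),
        sq_nonneg (2 - γ - ε * (2 + γ)), mul_pos hγ0 hγ0, sq_nonneg γ,
        mul_nonneg hγ0.le (sq_nonneg (2 - γ - ε * (2 + γ)))]
    rw [← hcs] at key
    have h2 : (0:ℝ) < (2 + γ) ^ 2 := by positivity
    nlinarith [key]
  have hden : 0 < 1 - (1 + γ) * c ^ 2 := by linarith
  -- numeric fact (N3)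
  have hN3 : γ * (1 + γ) * c ^ 2 ≤ (2 - γ - γ * ε / 2) * (1 - (1 + γ) * c ^ 2) := by
    have key : 2*(2+γ)*γ*(1+γ)*(2-γ-ε*(2+γ))^2
        ≤ (2*(2+γ)*(2-γ) - γ*(ε*(2+γ))) * ((2+γ)^2 - (1+γ)*(2-γ-ε*(2+γ))^2) := by
      set t := ε * (2 + γ) with ht
      have ht0 : 0 < t := hεs0
      have ht1 : t < 2 - γ := hεs
      nlinarith [sq_nonneg (2-γ-t), mul_pos ht0 hγ0, sq_nonneg t, sq_nonneg γ, sq_nonneg (γ*t),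
        mul_pos (mul_pos ht0 hγ0) hγ0, mul_nonneg (mul_nonneg ht0.le hγ0.le) (sq_nonneg (2-γ-t)),
        mul_nonneg hγ0.le (sq_nonneg (2-γ-t)), mul_nonneg ht0.le (sq_nonneg (2-γ-t)),
        mul_pos ht0 (sub_pos.2 ht1), mul_nonneg hγ0.le (mul_nonneg ht0.le (sub_pos.2 ht1).le),
        mul_nonneg (mul_nonneg hγ0.le hγ0.le) (mul_nonneg ht0.le (sub_pos.2 ht1).le)]
    rw [← hcs] at key
    have h2 : (0:ℝ) < 2 * (2 + γ) ^ 3 := by positivity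
    have key2 : 2*(2+γ)^3 * (γ * (1 + γ) * c ^ 2)
        ≤ 2*(2+γ)^3 * ((2 - γ - γ * ε / 2) * (1 - (1 + γ) * c ^ 2)) := by
      calc 2*(2+γ)^3 * (γ * (1 + γ) * c ^ 2)
          = 2*(2+γ)*γ*(1+γ)*(c*(2+γ))^2 := by ring
        _ ≤ (2*(2+γ)*(2-γ) - γ*(ε*(2+γ))) * ((2+γ)^2 - (1+γ)*(c*(2+γ))^2) := key
        _ = 2*(2+γ)^3 * ((2 - γ - γ * ε / 2) * (1 - (1 + γ) * c ^ 2)) := by ring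
    exact le_of_mul_le_mul_left key2 h2
  set α : ℝ := (1 + γ) * c ^ 2 / (1 - (1 + γ) * c ^ 2) with hα
  have hα0 : 0 ≤ α := by
    apply div_nonneg _ hden.le
    positivity
  have hαkey : (1 + α) * (c ^ 2 * (1 + γ)) = α := by
    rw [hα]; field_simp; ring
  have hαγ : α * γ ≤ 2 - γ - γ * ε / 2 := by
    rw [hα, div_mul_eq_mul_div, div_le_iff₀ hden]
    nlinarith [hN3]
  -- the shifted iterate
  set z : ℕ → EuclideanSpace ℝ (Fin d) := fun m => u m + a • F (u (m - 1)) - ustar with hz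
  have hrec : ∀ m : ℕ, z (m + 1) = z m - (a * γ) • F (u m) := by
    intro m
    simp only [hz, Nat.add_sub_cancel]
    rw [hupd m]
    module
  have hzexp : ∀ m : ℕ, ‖z (m + 1)‖ ^ 2
      = ‖z m‖ ^ 2 - 2 * (a * γ) * ⟪F (u m), z m⟫ + (a * γ) ^ 2 * ‖F (u m)‖ ^ 2 := by
    intro m
    rw [hrec m, norm_sub_sq_real]
    rw [real_inner_smul_right, norm_smul, Real.norm_eq_abs,
      abs_of_pos (mul_pos ha hγ0), real_inner_comm]
    ring
  have hinner : ∀ m : ℕ, ⟪F (u m), z m⟫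
      = ⟪F (u m), u m - ustar⟫ + a * ⟪F (u m), F (u (m - 1))⟫ := by
    intro m
    have : z m = (u m - ustar) + a • F (u (m - 1)) := by
      simp only [hz]; module
    rw [this, inner_add_right, real_inner_smul_right]
  have hmono' : ∀ m : ℕ, (0:ℝ) ≤ ⟪F (u m), u m - ustar⟫ := by
    intro m
    have h := hMono (u m) ustar
    rwa [hsol, sub_zero] at h
  have hcross : ∀ m : ℕ, 2 * ⟪F (u m), F (u (m - 1))⟫
      = ‖F (u m)‖ ^ 2 + ‖F (u (m - 1))‖ ^ 2 - ‖F (u m) - F (u (m - 1))‖ ^ 2 := by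
    intro m
    have h := norm_sub_sq_real (F (u m)) (F (u (m - 1)))
    linarith
  have hzle : ∀ m : ℕ, ‖z (m + 1)‖ ^ 2 ≤ ‖z m‖ ^ 2
      + a ^ 2 * γ * (-(1 - γ) * ‖F (u m)‖ ^ 2 - ‖F (u (m - 1))‖ ^ 2
        + ‖F (u m) - F (u (m - 1))‖ ^ 2) := by
    intro m
    have h1 := hzexp m
    have h2 := hinner m
    have h3 := hmono' m
    have h4 := hcross m
    have h5 : 0 ≤ 2 * (a * γ) * ⟪F (u m), u m - ustar⟫ := by
      have : (0:ℝ) ≤ 2 * (a * γ) := by positivity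
      exact mul_nonneg this h3
    have h6 : 2 * (a * γ) * (a * ⟪F (u m), F (u (m - 1))⟫)
        = a ^ 2 * γ * (‖F (u m)‖ ^ 2 + ‖F (u (m - 1))‖ ^ 2
            - ‖F (u m) - F (u (m - 1))‖ ^ 2) := by
      linear_combination (a ^ 2 * γ) * h4
    have h7 : 2 * (a * γ) * ⟪F (u m), z m⟫
        = 2 * (a * γ) * ⟪F (u m), u m - ustar⟫
          + 2 * (a * γ) * (a * ⟪F (u m), F (u (m - 1))⟫) := by
      linear_combination (2 * (a * γ)) * h2
    nlinarith [h1, h5, h6, h7]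
  -- Lipschitz bound on consecutive operator values
  have hD : ∀ m : ℕ, ‖F (u (m + 1)) - F (u m)‖ ^ 2
      ≤ c ^ 2 * ((1 + γ) * ‖F (u m) - F (u (m - 1))‖ ^ 2
          + γ * (1 + γ) * ‖F (u m)‖ ^ 2 - γ * ‖F (u (m - 1))‖ ^ 2) := by
    intro m
    have hlip := hLip (u (m + 1)) (u m)
    have hu : u (m + 1) - u m = -(a • ((1 + γ) • F (u m) - F (u (m - 1)))) := by
      rw [hupd m]; module
    rw [hu, norm_neg, norm_smul, Real.norm_eq_abs, abs_of_pos ha] at hlip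
    have hsq : ‖F (u (m + 1)) - F (u m)‖ ^ 2
        ≤ (L * (a * ‖(1 + γ) • F (u m) - F (u (m - 1))‖)) ^ 2 := by
      have h0 : (0:ℝ) ≤ ‖F (u (m + 1)) - F (u m)‖ := norm_nonneg _
      exact pow_le_pow_left₀ h0 hlip 2
    have hid := ogda_sq_identity γ (by linarith) (F (u m)) (F (u (m - 1)))
    calc ‖F (u (m + 1)) - F (u m)‖ ^ 2
        ≤ (L * (a * ‖(1 + γ) • F (u m) - F (u (m - 1))‖)) ^ 2 := hsq
      _ = c ^ 2 * ‖(1 + γ) • F (u m) - F (u (m - 1))‖ ^ 2 := by rw [hc]; ring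
      _ = c ^ 2 * ((1 + γ) * ‖F (u m) - F (u (m - 1))‖ ^ 2
          + γ * (1 + γ) * ‖F (u m)‖ ^ 2 - γ * ‖F (u (m - 1))‖ ^ 2) := by rw [hid]
  clear_value c
  clear_value α
  -- potential
  set En : ℕ → ℝ := fun m => ‖z m‖ ^ 2
      + a ^ 2 * γ * (α * ‖F (u (m - 1)) - F (u (m - 2))‖ ^ 2
        + (1 - γ) * ‖F (u (m - 1))‖ ^ 2) with hEn
  have hdesc : ∀ m : ℕ, En (m + 2) ≤ En (m + 1) - a ^ 2 * γ * (γ * ε / 2) * ‖F (u m)‖ ^ 2 := by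
    intro m
    have hz1 := hzle (m + 1)
    have hD1 := hD m
    have hidx0 : m + 1 + 1 = m + 2 := rfl
    rw [hidx0] at hz1
    simp only [Nat.add_sub_cancel] at hz1 ⊢
    have hidx1 : m + 2 - 1 = m + 1 := rfl
    have hidx2 : m + 2 - 2 = m := rfl
    have hidx3 : m + 1 - 2 = m - 1 := rfl
    simp only [hEn, hidx1, hidx2, hidx3, Nat.add_sub_cancel]
    -- abbreviations
    set N1 := ‖F (u (m + 1))‖ ^ 2 with hN1d
    set N0 := ‖F (u m)‖ ^ 2 with hN0d
    set M := ‖F (u (m - 1))‖ ^ 2 with hMd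
    set Dp := ‖F (u (m + 1)) - F (u m)‖ ^ 2 with hDpd
    set Dm := ‖F (u m) - F (u (m - 1))‖ ^ 2 with hDmd
    have hB : (1 + α) * Dp ≤ α * Dm + α * γ * N0 := by
      have h1 := mul_le_mul_of_nonneg_left hD1 (by linarith : (0:ℝ) ≤ 1 + α)
      have h2 : (1 + α) * (c ^ 2 * ((1 + γ) * Dm + γ * (1 + γ) * N0 - γ * M))
          = α * Dm + α * γ * N0 - (1 + α) * c ^ 2 * γ * M := by
        linear_combination (Dm + γ * N0) * hαkey
      have h3 : (0:ℝ) ≤ (1 + α) * c ^ 2 * γ * M :=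
        mul_nonneg (mul_nonneg (mul_nonneg (by linarith) (sq_nonneg c)) hγ0.le)
          (sq_nonneg _)
      linarith
    have hN0 : (0:ℝ) ≤ N0 := sq_nonneg _
    have step : (1 + α) * Dp ≤ α * Dm + (2 - γ - γ * ε / 2) * N0 := by
      nlinarith [hB, mul_le_mul_of_nonneg_right hαγ hN0]
    have hP : (0:ℝ) ≤ a ^ 2 * γ := by positivity
    have step2 := mul_le_mul_of_nonneg_left step hP
    nlinarith [hz1, step2]
  -- telescoping
  have hsum : ∀ K : ℕ, a ^ 2 * γ * (γ * ε / 2) * (∑ j ∈ Finset.range K, ‖F (u j)‖ ^ 2)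
      + En (K + 1) ≤ En 1 := by
    intro K
    induction K with
    | zero => simp
    | succ n ih =>
      have hd := hdesc n
      rw [Finset.sum_range_succ]
      have : n + 1 + 1 = n + 2 := rfl
      rw [this]
      nlinarith [hd, ih]
  have hz0 : z 0 = u 0 + a • F (u 0) - ustar := rfl
  clear_value z
  have hE1 : En 1 ≤ ‖z 0‖ ^ 2 := by
    have h1 := hzle 0
    norm_num [sub_self, norm_zero] at h1
    simp only [hEn]
    norm_num [sub_self, norm_zero]
    have hP : (0:ℝ) ≤ a ^ 2 * γ := by positivity
    linarith [h1, mul_nonneg hP (sq_nonneg ‖F (u 0)‖)]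
  have hEpos : 0 ≤ En (k + 1) := by
    simp only [hEn]
    have h1 : (0:ℝ) ≤ α * ‖F (u (k + 1 - 1)) - F (u (k + 1 - 2))‖ ^ 2 :=
      mul_nonneg hα0 (sq_nonneg _)
    have h2 : (0:ℝ) ≤ (1 - γ) * ‖F (u (k + 1 - 1))‖ ^ 2 :=
      mul_nonneg (by linarith) (sq_nonneg _)
    have hP : (0:ℝ) ≤ a ^ 2 * γ := by positivity
    exact add_nonneg (sq_nonneg _) (mul_nonneg hP (add_nonneg h1 h2))
  clear_value En
  have hS : a ^ 2 * γ * (γ * ε / 2) * (∑ j ∈ Finset.range k, ‖F (u j)‖ ^ 2)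
      ≤ ‖z 0‖ ^ 2 := by
    have := hsum k
    linarith
  rw [← hz0]
  have hk0 : (0:ℝ) < (k:ℝ) := by exact_mod_cast Nat.lt_of_lt_of_le Nat.zero_lt_one hk
  have hpos : (0:ℝ) < (k:ℝ) * a ^ 2 * γ ^ 2 * ε := by positivity
  rw [div_mul_eq_mul_div, div_mul_eq_mul_div, div_le_div_iff₀ hk0 hpos]
  have hS2 : (∑ j ∈ Finset.range k, ‖F (u j)‖ ^ 2) * (a ^ 2 * γ ^ 2 * ε)
      ≤ 2 * ‖z 0‖ ^ 2 := by linarith [hS]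
  linarith [mul_le_mul_of_nonneg_left hS2 hk0.le]
end

section
/- Let F : ℝ^d → ℝ^d have a weak Minty solution u* with parameter ρ > 0, and let (u_k)_{k≥0} be the OGDA+ iterates with step size a > 0 and parameter 0 < γ ≤ 1. Then, writing g_k = F(u_k), for every k ≥ 0: ‖u_{k+1} + a·g_k − u*‖² ≤ ‖u_k + a·g_{k−1} − u*‖² + a·γ·ρ·‖g_k‖² + (4a/γ)·⟨g_k − g_{k−1}, u_k − u_{k+1}⟩ − (2/γ − 1)·‖u_{k+1} − u_k‖² − a²·(1 + 2/γ)·‖g_k − g_{k−1}‖². -/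
open scoped RealInnerProductSpace

theorem ogda_plus_descent_lemma (d : ℕ)
    (F : EuclideanSpace ℝ (Fin d) → EuclideanSpace ℝ (Fin d))
    (ρ a γ : ℝ) (ustar : EuclideanSpace ℝ (Fin d))
    (hρ : 0 < ρ)
    (hweak : ∀ u, ⟪F u, u - ustar⟫ ≥ -(ρ / 2) * ‖F u‖ ^ 2)
    (ha : 0 < a) (hγ0 : 0 < γ) (hγ1 : γ ≤ 1)
    (u : ℕ → EuclideanSpace ℝ (Fin d))
    (hupd : ∀ k : ℕ, u (k + 1) = u k - a • ((1 + γ) • F (u k) - F (u (k - 1))))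
    (k : ℕ) :
    ‖u (k + 1) + a • F (u k) - ustar‖ ^ 2
      ≤ ‖u k + a • F (u (k - 1)) - ustar‖ ^ 2 + a * γ * ρ * ‖F (u k)‖ ^ 2
        + (4 * a / γ) * ⟪F (u k) - F (u (k - 1)), u k - u (k + 1)⟫
        - (2 / γ - 1) * ‖u (k + 1) - u k‖ ^ 2
        - a ^ 2 * (1 + 2 / γ) * ‖F (u k) - F (u (k - 1))‖ ^ 2 := by
  have hup := hupd k
  set g := F (u k) with hg
  set gp := F (u (k - 1)) with hgp
  have hminty : ⟪g, u k - ustar⟫ ≥ -(ρ / 2) * ‖g‖ ^ 2 := hweak (u k)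
  rw [hup]
  have key : ‖u k - a • ((1 + γ) • g - gp) + a • g - ustar‖ ^ 2
      = ‖u k + a • gp - ustar‖ ^ 2
        + (4 * a / γ) * ⟪g - gp, u k - (u k - a • ((1 + γ) • g - gp))⟫
        - (2 / γ - 1) * ‖u k - a • ((1 + γ) • g - gp) - u k‖ ^ 2
        - a ^ 2 * (1 + 2 / γ) * ‖g - gp‖ ^ 2
        - 2 * a * γ * ⟪g, u k - ustar⟫ := by
    simp only [← real_inner_self_eq_norm_sq, inner_sub_left, inner_sub_right,
      inner_add_left, inner_add_right, real_inner_smul_left, real_inner_smul_right,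
      real_inner_comm g (u k), real_inner_comm gp (u k), real_inner_comm ustar (u k),
      real_inner_comm gp g, real_inner_comm ustar g, real_inner_comm ustar gp]
    field_simp
    ring
  have hnn : 0 ≤ 2 * a * γ * (⟪g, u k - ustar⟫ + ρ / 2 * ‖g‖ ^ 2) := by
    apply mul_nonneg (by positivity)
    linarith
  nlinarith [key, hnn]
end

section
/- Let F : ℝ^d → ℝ^d be L-Lipschitz with L > 0 and have a weak Minty solution u* with parameter ρ > 0. Let (u_k)_{k≥0} be the OGDA+ iterates with step size a > 0 and parameter 0 < γ ≤ 1, let 0 ≤ λ ≤ 2/γ, and assume a·L·(2 + γ − λ·γ) ≤ 2 − λ·γ. Then for every k ≥ 0: ‖u_{k+1} + a·F(u_k) − u*‖² + a·γ·(a·γ·λ − ρ)·‖F(u_k)‖² ≤ ‖u_k + a·F(u_{k−1}) − u*‖² + (a·L·(2/γ − λ) − a²·L²·(1 + 2/γ − λ))·‖u_k − u_{k−1}‖² − (2/γ − 1 − λ − a·L·(2/γ − λ))·‖u_{k+1} − u_k‖². -/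
open scoped RealInnerProductSpace

set_option maxHeartbeats 1000000 in
lemma ogda_scalar_main (a γ lam ρ L c N Em D S2 Zp2 Z2 I1 I2 : ℝ)
    (ha : 0 < a) (hγ0 : 0 < γ) (hL : 0 < L)
    (hγc : γ * c = 2) (hlam : lam ≤ c)
    (hstep : a*L*(2+γ-lam*γ) ≤ 2-lam*γ)
    (hA2 : Zp2 = Z2 - 2*(a*γ)*I1 - 2*(a^2*γ)*N^2 + 2*(a^2*γ)*I2 + (a*γ)^2*N^2)
    (hS : S2 = (a*γ)^2*N^2 + 2*((a*γ)*a)*I2 + a^2*Em^2)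
    (hC : I1 ≥ -(ρ/2)*N^2)
    (hCS : I2 ≤ N*Em)
    (hE : Em ≤ L*D)
    (hEm0 : 0 ≤ Em) :
    Zp2 + a*γ*(a*γ*lam - ρ)*N^2
      ≤ Z2 + (a*L*(c-lam) - a^2*L^2*(1+c-lam))*D^2
        - (c-1-lam-a*L*(c-lam))*S2 := by
  have hs : 0 ≤ c - lam := by linarith
  have e1 : γ * (a*L*(1+(c-lam))) = a*L*(2+γ-lam*γ) := by linear_combination a*L*hγc
  have e2 : γ * (c-lam) = 2 - lam*γ := by linear_combination hγc
  have hst : a*L*(1+(c-lam)) ≤ c - lam := by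
    have h := hstep
    rw [← e1, ← e2] at h
    exact le_of_mul_le_mul_left h hγ0
  have htpos : 0 < a*L := mul_pos ha hL
  have ht1 : a*L < 1 := by nlinarith [hst, hs, htpos]
  have hE2 : Em^2 ≤ (L*D)^2 := by nlinarith [hE, hEm0]
  have hSle : S2 ≤ (a*γ*N + a*Em)^2 := by
    have h2 := mul_le_mul_of_nonneg_left hCS (by positivity : (0:ℝ) ≤ 2*((a*γ)*a))
    linarith [hS, h2]
  have hpoly : ∀ s t P R D' : ℝ, 0 ≤ s → 0 < t → t*(1+s) ≤ s → R^2 ≤ (t*D')^2 →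
      s*(1-t)*(P+R)^2 ≤ s*P^2 + R^2 + (t*s - t^2*(1+s))*D'^2 := by
    intro s t P R D' hs0 ht0 hts hR2
    have key : t*((s*P^2 + R^2 + (t*s - t^2*(1+s))*D'^2) - s*(1-t)*(P+R)^2)
        = s*(t*P-(1-t)*R)^2 + (s - t*(1+s))*((t*D')^2 - R^2) := by ring
    have h1 : 0 ≤ s*(t*P-(1-t)*R)^2 := mul_nonneg hs0 (sq_nonneg _)
    have h2 : 0 ≤ (s - t*(1+s))*((t*D')^2 - R^2) :=
      mul_nonneg (by linarith) (by linarith)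
    have h4 : t*0 ≤ t*((s*P^2 + R^2 + (t*s - t^2*(1+s))*D'^2) - s*(1-t)*(P+R)^2) := by
      rw [key]; linarith
    have h5 := le_of_mul_le_mul_left h4 ht0
    linarith
  have hstar : (c-lam)*(1-a*L)*S2
      ≤ (c-lam)*(a*γ)^2*N^2 + a^2*Em^2
        + (a*L*(c-lam) - a^2*L^2*(1+(c-lam)))*D^2 := by
    have hnn : 0 ≤ (c-lam)*(1-a*L) := mul_nonneg hs (by linarith)
    have h2 := mul_le_mul_of_nonneg_left hSle hnn
    have h3 := hpoly (c-lam) (a*L) (a*γ*N) (a*Em) D hs htpos hst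
      (by nlinarith [hE2, sq_nonneg a])
    linarith [h2, h3]
  have hC2 : 0 ≤ a*γ*ρ*N^2 + 2*(a*γ)*I1 := by
    have h6 : (a*γ)*(-(ρ/2)*N^2) ≤ (a*γ)*I1 :=
      mul_le_mul_of_nonneg_left (by linarith [hC]) (le_of_lt (mul_pos ha hγ0))
    nlinarith [h6]
  have hid : (c-lam)*(a*γ)^2*N^2 = (2-γ*lam)*a^2*γ*N^2 := by
    linear_combination (a^2*γ*N^2) * hγc
  linarith [hA2, hS, hC2, hstar, hid]

set_option maxHeartbeats 1000000 in
theorem ogda_plus_one_step_estimate (d : ℕ)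
    (F : EuclideanSpace ℝ (Fin d) → EuclideanSpace ℝ (Fin d))
    (L ρ a γ lam : ℝ) (ustar : EuclideanSpace ℝ (Fin d))
    (hL : 0 < L) (hLip : ∀ u v, ‖F u - F v‖ ≤ L * ‖u - v‖)
    (hρ : 0 < ρ)
    (hweak : ∀ u, ⟪F u, u - ustar⟫ ≥ -(ρ / 2) * ‖F u‖ ^ 2)
    (ha : 0 < a) (hγ0 : 0 < γ) (hγ1 : γ ≤ 1)
    (hlam0 : 0 ≤ lam) (hlam2 : lam ≤ 2 / γ)
    (hstep : a * L * (2 + γ - lam * γ) ≤ 2 - lam * γ)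
    (u : ℕ → EuclideanSpace ℝ (Fin d))
    (hupd : ∀ k : ℕ, u (k + 1) = u k - a • ((1 + γ) • F (u k) - F (u (k - 1))))
    (k : ℕ) :
    ‖u (k + 1) + a • F (u k) - ustar‖ ^ 2
        + a * γ * (a * γ * lam - ρ) * ‖F (u k)‖ ^ 2
      ≤ ‖u k + a • F (u (k - 1)) - ustar‖ ^ 2
        + (a * L * (2 / γ - lam) - a ^ 2 * L ^ 2 * (1 + 2 / γ - lam)) * ‖u k - u (k - 1)‖ ^ 2
        - (2 / γ - 1 - lam - a * L * (2 / γ - lam)) * ‖u (k + 1) - u k‖ ^ 2 := by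
  have hexp1 : ∀ (w v : EuclideanSpace ℝ (Fin d)) (r : ℝ),
      ‖w - r • v‖ ^ 2 = ‖w‖ ^ 2 - 2 * r * ⟪v, w⟫ + r ^ 2 * ‖v‖ ^ 2 := by
    intro w v r
    rw [norm_sub_sq_real, real_inner_smul_right, norm_smul, Real.norm_eq_abs, mul_pow, sq_abs,
      real_inner_comm]
    ring
  have hexp2 : ∀ (v w : EuclideanSpace ℝ (Fin d)) (r b : ℝ),
      ‖r • v + b • w‖ ^ 2 = r ^ 2 * ‖v‖ ^ 2 + 2 * (r * b) * ⟪v, w⟫ + b ^ 2 * ‖w‖ ^ 2 := by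
    intro v w r b
    rw [norm_add_sq_real, real_inner_smul_left, real_inner_smul_right, norm_smul, norm_smul,
      Real.norm_eq_abs, Real.norm_eq_abs, mul_pow, mul_pow, sq_abs, sq_abs]
    ring
  have hz : u (k+1) + a • F (u k) - ustar
      = (u k + a • F (u (k-1)) - ustar) - (a*γ) • F (u k) := by
    rw [hupd k]; module
  have hδ : u (k+1) - u k = -((a*γ) • F (u k) + a • (F (u k) - F (u (k-1)))) := by
    rw [hupd k]; module
  have hA : ‖u (k+1) + a • F (u k) - ustar‖ ^ 2
      = ‖u k + a • F (u (k-1)) - ustar‖ ^ 2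
        - 2*(a*γ) * ⟪F (u k), u k + a • F (u (k-1)) - ustar⟫
        + (a*γ)^2 * ‖F (u k)‖^2 := by
    rw [hz, hexp1]
  have hB : ⟪F (u k), u k + a • F (u (k-1)) - ustar⟫
      = ⟪F (u k), u k - ustar⟫
        + a * (‖F (u k)‖^2 - ⟪F (u k), F (u k) - F (u (k-1))⟫) := by
    have h' : u k + a • F (u (k-1)) - ustar = (u k - ustar) + a • F (u (k-1)) := by
      module
    rw [h']
    simp only [inner_add_right, inner_sub_right, real_inner_smul_right,
      real_inner_self_eq_norm_sq]
    ring
  have hA2 : ‖u (k+1) + a • F (u k) - ustar‖ ^ 2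
      = ‖u k + a • F (u (k-1)) - ustar‖ ^ 2
        - 2*(a*γ)*⟪F (u k), u k - ustar⟫ - 2*(a^2*γ)*‖F (u k)‖^2
        + 2*(a^2*γ)*⟪F (u k), F (u k) - F (u (k-1))⟫ + (a*γ)^2*‖F (u k)‖^2 := by
    rw [hA, hB]; ring
  have hS : ‖u (k+1) - u k‖ ^ 2
      = (a*γ)^2 * ‖F (u k)‖^2
        + 2*((a*γ)*a) * ⟪F (u k), F (u k) - F (u (k-1))⟫
        + a^2 * ‖F (u k) - F (u (k-1))‖^2 := by
    rw [hδ, norm_neg, hexp2]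
  have hγc : γ * (2/γ) = 2 := by field_simp
  exact ogda_scalar_main a γ lam ρ L (2/γ) (‖F (u k)‖) (‖F (u k) - F (u (k-1))‖)
    (‖u k - u (k-1)‖) (‖u (k+1) - u k‖^2)
    (‖u (k+1) + a • F (u k) - ustar‖^2) (‖u k + a • F (u (k-1)) - ustar‖^2)
    (⟪F (u k), u k - ustar⟫) (⟪F (u k), F (u k) - F (u (k-1))⟫)
    ha hγ0 hL hγc hlam2 hstep hA2 hS (hweak (u k))
    (real_inner_le_norm _ _) (hLip _ _) (norm_nonneg _)
end

section
/- Let F : ℝ^d → ℝ^d have a weak Minty solution u* with parameter ρ > 0, and let (u_k, ū_k, a_k) be generated by the adaptive EG+ method with parameters τ ∈ (0,1), 0 < γ ≤ 1, starting point ū₀ and initial step size a₀ > 0. Then for every k ≥ 0: (1/γ)·‖ū_{k+1} − u*‖² ≤ (1/γ)·‖ū_k − u*‖² − a_k·(a_k·γ·(1 − γ) − ρ)·‖F(u_k)‖² − (1 − τ·a_k/a_{k+1})·(‖u_k − ū_k‖² + ‖u_k − ū_{k+1}‖²). -/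
open scoped RealInnerProductSpace

private lemma adaptive_eg_aux {E : Type*} [NormedAddCommGroup E] [InnerProductSpace ℝ E]
    (x Fu Fub : E) (ρ τ γ A Ap : ℝ)
    (hApos : 0 < A) (hAppos : 0 < Ap) (hγ0 : 0 < γ) (hτ0 : 0 < τ)
    (hm : ⟪Fu, x - A • Fub⟫ ≥ -(ρ / 2) * ‖Fu‖ ^ 2)
    (hlipk : Ap * ‖Fu - Fub‖ ≤ τ * ‖A • Fub‖) :
    (1 / γ) * ‖x - (A * γ) • Fu‖ ^ 2
      ≤ (1 / γ) * ‖x‖ ^ 2 - A * (A * γ * (1 - γ) - ρ) * ‖Fu‖ ^ 2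
        - (1 - τ * A / Ap) * (‖A • Fub‖ ^ 2 + ‖(A * γ) • Fu - A • Fub‖ ^ 2) := by
  have hsm : ‖A • Fub‖ = A * ‖Fub‖ := by
    rw [norm_smul, Real.norm_eq_abs, abs_of_pos hApos]
  have hm' : ⟪Fu, x⟫ - A * ⟪Fu, Fub⟫ ≥ -(ρ / 2) * ‖Fu‖ ^ 2 := by
    rw [← real_inner_smul_right, ← inner_sub_right]; exact hm
  have e1 : ‖x - (A * γ) • Fu‖ ^ 2
      = ‖x‖ ^ 2 - 2 * (A * γ) * ⟪Fu, x⟫ + (A * γ) ^ 2 * ‖Fu‖ ^ 2 := by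
    rw [norm_sub_sq_real, real_inner_smul_right, real_inner_comm x Fu, norm_smul,
      Real.norm_eq_abs, mul_pow, sq_abs]
    ring
  have e2 : ‖(A * γ) • Fu - A • Fub‖ ^ 2
      = (A * γ) ^ 2 * ‖Fu‖ ^ 2 - 2 * ((A * γ) * A) * ⟪Fu, Fub⟫ + A ^ 2 * ‖Fub‖ ^ 2 := by
    rw [norm_sub_sq_real, real_inner_smul_left, real_inner_smul_right, norm_smul, norm_smul,
      Real.norm_eq_abs, Real.norm_eq_abs, mul_pow, mul_pow, sq_abs, sq_abs]
    ring
  have expand : ⟪Fu - Fub, (A * γ) • Fu - A • Fub⟫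
      = A * γ * ‖Fu‖ ^ 2 - (A + A * γ) * ⟪Fu, Fub⟫ + A * ‖Fub‖ ^ 2 := by
    rw [inner_sub_left, inner_sub_right, inner_sub_right, real_inner_smul_right,
      real_inner_smul_right, real_inner_smul_right, real_inner_smul_right,
      real_inner_comm Fub Fu, real_inner_self_eq_norm_sq, real_inner_self_eq_norm_sq]
    ring
  set t : ℝ := τ * A / Ap with htdef
  set nW : ℝ := ‖(A * γ) • Fu - A • Fub‖ with hnW
  set nD : ℝ := ‖Fu - Fub‖ with hnD
  have ht0 : 0 ≤ t := by positivity
  have f4 : -(2 * A) * ⟪Fu, x⟫ ≤ -(2 * A ^ 2) * ⟪Fu, Fub⟫ + A * ρ * ‖Fu‖ ^ 2 := by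
    have h := mul_le_mul_of_nonneg_left hm'.le (by positivity : (0:ℝ) ≤ 2 * A)
    nlinarith [h]
  have f5 : A * γ * ‖Fu‖ ^ 2 - (A + A * γ) * ⟪Fu, Fub⟫ + A * ‖Fub‖ ^ 2 ≤ nD * nW := by
    rw [← expand]; exact real_inner_le_norm _ _
  have hdt : nD ≤ t * ‖Fub‖ := by
    have h1 : Ap * nD ≤ τ * (A * ‖Fub‖) := by rw [← hsm]; exact hlipk
    have h2 : nD ≤ τ * (A * ‖Fub‖) / Ap := by
      rw [le_div_iff₀ hAppos]; linarith
    calc nD ≤ τ * (A * ‖Fub‖) / Ap := h2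
      _ = t * ‖Fub‖ := by rw [htdef]; ring
  have h7 : 2 * (A * ‖Fub‖) * nW ≤ (A * ‖Fub‖) ^ 2 + nW ^ 2 := by
    nlinarith [sq_nonneg (A * ‖Fub‖ - nW)]
  have f6 : 2 * A * (nD * nW) ≤ t * (A ^ 2 * ‖Fub‖ ^ 2 + nW ^ 2) := by
    have hWnn : (0:ℝ) ≤ nW := norm_nonneg _
    have h8 : (2 * A * nW) * nD ≤ (2 * A * nW) * (t * ‖Fub‖) :=
      mul_le_mul_of_nonneg_left hdt (by positivity)
    have h9 : t * (2 * (A * ‖Fub‖) * nW) ≤ t * ((A * ‖Fub‖) ^ 2 + nW ^ 2) :=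
      mul_le_mul_of_nonneg_left h7 ht0
    linarith [h8, h9]
  have hc : 2 * A ^ 2 * γ * ‖Fu‖ ^ 2 - 2 * A ^ 2 * (1 + γ) * ⟪Fu, Fub⟫ + 2 * A ^ 2 * ‖Fub‖ ^ 2
      ≤ t * (A ^ 2 * ‖Fub‖ ^ 2 + nW ^ 2) := by
    have f5' := mul_le_mul_of_nonneg_left f5 (by positivity : (0:ℝ) ≤ 2 * A)
    nlinarith [f5', f6]
  have key : -(2 * A) * ⟪Fu, x⟫ + A ^ 2 * γ * ‖Fu‖ ^ 2
      ≤ A * ρ * ‖Fu‖ ^ 2 - A ^ 2 * γ * (1 - γ) * ‖Fu‖ ^ 2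
        - (1 - t) * (A ^ 2 * ‖Fub‖ ^ 2 + nW ^ 2) := by
    linarith [f4, hc, e2]
  rw [e1, hsm]
  have hγne : γ ≠ 0 := ne_of_gt hγ0
  have hsplit : (1 / γ) * (‖x‖ ^ 2 - 2 * (A * γ) * ⟪Fu, x⟫ + (A * γ) ^ 2 * ‖Fu‖ ^ 2)
      = (1 / γ) * ‖x‖ ^ 2 - 2 * A * ⟪Fu, x⟫ + A ^ 2 * γ * ‖Fu‖ ^ 2 := by
    field_simp
  rw [hsplit]
  linarith [key]

theorem adaptive_eg_plus_descent_lemma (d : ℕ)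
    (F : EuclideanSpace ℝ (Fin d) → EuclideanSpace ℝ (Fin d))
    (ρ τ γ : ℝ) (ustar : EuclideanSpace ℝ (Fin d))
    (hρ : 0 < ρ)
    (hweak : ∀ u, ⟪F u, u - ustar⟫ ≥ -(ρ / 2) * ‖F u‖ ^ 2)
    (hτ0 : 0 < τ) (hτ1 : τ < 1) (hγ0 : 0 < γ) (hγ1 : γ ≤ 1)
    (u ubar : ℕ → EuclideanSpace ℝ (Fin d)) (a : ℕ → ℝ)
    (ha0 : 0 < a 0)
    (hstep_eq : ∀ k : ℕ, F (u k) = F (ubar k) → a (k + 1) = a k)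
    (hstep_ne : ∀ k : ℕ, F (u k) ≠ F (ubar k) →
      a (k + 1) = min (a k) (τ * ‖u k - ubar k‖ / ‖F (u k) - F (ubar k)‖))
    (hu : ∀ k : ℕ, u k = ubar k - a k • F (ubar k))
    (hubar : ∀ k : ℕ, ubar (k + 1) = ubar k - (a k * γ) • F (u k)) :
    ∀ k : ℕ,
      (1 / γ) * ‖ubar (k + 1) - ustar‖ ^ 2
        ≤ (1 / γ) * ‖ubar k - ustar‖ ^ 2
          - a k * (a k * γ * (1 - γ) - ρ) * ‖F (u k)‖ ^ 2
          - (1 - τ * a k / a (k + 1)) * (‖u k - ubar k‖ ^ 2 + ‖u k - ubar (k + 1)‖ ^ 2) := by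
  have hapos : ∀ k, 0 < a k := by
    intro k
    induction k with
    | zero => exact ha0
    | succ n ih =>
      by_cases h : F (u n) = F (ubar n)
      · rw [hstep_eq n h]; exact ih
      · rw [hstep_ne n h]
        have hFd : (0:ℝ) < ‖F (u n) - F (ubar n)‖ := by
          rw [norm_pos_iff]; exact sub_ne_zero.mpr h
        have hud : u n ≠ ubar n := fun he => h (by rw [he])
        have hnd : (0:ℝ) < ‖u n - ubar n‖ := by
          rw [norm_pos_iff]; exact sub_ne_zero.mpr hud
        exact lt_min ih (by positivity)
  have hlip : ∀ k, a (k + 1) * ‖F (u k) - F (ubar k)‖ ≤ τ * ‖u k - ubar k‖ := by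
    intro k
    by_cases h : F (u k) = F (ubar k)
    · rw [h, sub_self, norm_zero, mul_zero]
      positivity
    · have hFd : (0:ℝ) < ‖F (u k) - F (ubar k)‖ := by
        rw [norm_pos_iff]; exact sub_ne_zero.mpr h
      have h1 : a (k + 1) ≤ τ * ‖u k - ubar k‖ / ‖F (u k) - F (ubar k)‖ := by
        rw [hstep_ne k h]; exact min_le_right _ _
      calc a (k + 1) * ‖F (u k) - F (ubar k)‖
          ≤ (τ * ‖u k - ubar k‖ / ‖F (u k) - F (ubar k)‖) * ‖F (u k) - F (ubar k)‖ :=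
            mul_le_mul_of_nonneg_right h1 hFd.le
        _ = τ * ‖u k - ubar k‖ := by field_simp
  intro k
  have hd1 : ubar (k + 1) - ustar = (ubar k - ustar) - (a k * γ) • F (u k) := by
    rw [hubar k]; abel
  have hd2 : u k - ubar k = -(a k • F (ubar k)) := by
    rw [hu k]; abel
  have hd3 : u k - ubar (k + 1) = (a k * γ) • F (u k) - a k • F (ubar k) := by
    have h1 : u k - ubar (k + 1) = (u k - ubar k) - (ubar (k + 1) - ubar k) := by abel
    have h2 : ubar (k + 1) - ubar k = -((a k * γ) • F (u k)) := by rw [hubar k]; abel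
    rw [h1, h2, hd2]; abel
  have hd4 : u k - ustar = (ubar k - ustar) - a k • F (ubar k) := by
    rw [hu k]; abel
  have hm : ⟪F (u k), (ubar k - ustar) - a k • F (ubar k)⟫ ≥ -(ρ / 2) * ‖F (u k)‖ ^ 2 := by
    rw [← hd4]; exact hweak (u k)
  have hlipk : a (k + 1) * ‖F (u k) - F (ubar k)‖ ≤ τ * ‖a k • F (ubar k)‖ := by
    have h := hlip k
    rwa [show ‖u k - ubar k‖ = ‖a k • F (ubar k)‖ by rw [hd2, norm_neg]] at h
  have haux := adaptive_eg_aux (ubar k - ustar) (F (u k)) (F (ubar k)) ρ τ γ (a k) (a (k + 1))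
    (hapos k) (hapos (k + 1)) hγ0 hτ0 hm hlipk
  rw [hd1, hd3, hd2, norm_neg]
  exact haux
end

section
/- Let F : ℝ^d → ℝ^d be L-Lipschitz with L > 0, and let (a_k)_{k≥0} be the step sizes generated by the adaptive EG+ method with parameters τ ∈ (0,1), 0 < γ ≤ 1, starting point ū₀ and initial step size a₀ > 0. Then the sequence (a_k) is nonincreasing and a_k ≥ min{a₀, τ/L} > 0 for all k ≥ 0. -/
theorem adaptive_eg_plus_step_size_bounds (d : ℕ)
    (F : EuclideanSpace ℝ (Fin d) → EuclideanSpace ℝ (Fin d))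
    (L τ γ : ℝ)
    (hL : 0 < L) (hLip : ∀ u v, ‖F u - F v‖ ≤ L * ‖u - v‖)
    (hτ0 : 0 < τ) (hτ1 : τ < 1) (hγ0 : 0 < γ) (hγ1 : γ ≤ 1)
    (u ubar : ℕ → EuclideanSpace ℝ (Fin d)) (a : ℕ → ℝ)
    (ha0 : 0 < a 0)
    (hstep_eq : ∀ k : ℕ, F (u k) = F (ubar k) → a (k + 1) = a k)
    (hstep_ne : ∀ k : ℕ, F (u k) ≠ F (ubar k) →
      a (k + 1) = min (a k) (τ * ‖u k - ubar k‖ / ‖F (u k) - F (ubar k)‖))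
    (hu : ∀ k : ℕ, u k = ubar k - a k • F (ubar k))
    (hubar : ∀ k : ℕ, ubar (k + 1) = ubar k - (a k * γ) • F (u k)) :
    (∀ k : ℕ, a (k + 1) ≤ a k) ∧
      (∀ k : ℕ, min (a 0) (τ / L) ≤ a k) ∧ 0 < min (a 0) (τ / L) := by
  have hkey : ∀ k : ℕ, F (u k) ≠ F (ubar k) →
      τ / L ≤ τ * ‖u k - ubar k‖ / ‖F (u k) - F (ubar k)‖ := by
    intro k hk
    have hpos : 0 < ‖F (u k) - F (ubar k)‖ := by
      rw [norm_pos_iff, sub_ne_zero]; exact hk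
    rw [div_le_div_iff₀ hL hpos]
    have := hLip (u k) (ubar k)
    calc τ * ‖F (u k) - F (ubar k)‖ ≤ τ * (L * ‖u k - ubar k‖) := by
          exact mul_le_mul_of_nonneg_left this hτ0.le
      _ = τ * ‖u k - ubar k‖ * L := by ring
  have hmono : ∀ k : ℕ, a (k + 1) ≤ a k := by
    intro k
    by_cases h : F (u k) = F (ubar k)
    · rw [hstep_eq k h]
    · rw [hstep_ne k h]; exact min_le_left _ _
  refine ⟨hmono, ?_, lt_min ha0 (div_pos hτ0 hL)⟩
  intro k
  induction k with
  | zero => exact min_le_left _ _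
  | succ k ih =>
    by_cases h : F (u k) = F (ubar k)
    · rw [hstep_eq k h]; exact ih
    · rw [hstep_ne k h]
      exact le_min ih (le_trans (min_le_right _ _) (hkey k h))
end

section
/- Let F : ℝ^d → ℝ^d be L-Lipschitz with L > 0, and let (a_k)_{k≥0} be the step sizes generated by the adaptive EG+ method with parameters τ ∈ (0,1), 0 < γ ≤ 1, starting point ū₀ and initial step size a₀ > 0. Then (a_k) converges to a limit a_∞ ≥ min{a₀, τ/L} > 0, and there exists k₀ ∈ ℕ such that a_k ≤ a_{k+1}/τ for all k ≥ k₀. -/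
theorem adaptive_eg_plus_step_size_converges (d : ℕ)
    (F : EuclideanSpace ℝ (Fin d) → EuclideanSpace ℝ (Fin d))
    (L τ γ : ℝ)
    (hL : 0 < L) (hLip : ∀ u v, ‖F u - F v‖ ≤ L * ‖u - v‖)
    (hτ0 : 0 < τ) (hτ1 : τ < 1) (hγ0 : 0 < γ) (hγ1 : γ ≤ 1)
    (u ubar : ℕ → EuclideanSpace ℝ (Fin d)) (a : ℕ → ℝ)
    (ha0 : 0 < a 0)
    (hstep_eq : ∀ k : ℕ, F (u k) = F (ubar k) → a (k + 1) = a k)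
    (hstep_ne : ∀ k : ℕ, F (u k) ≠ F (ubar k) →
      a (k + 1) = min (a k) (τ * ‖u k - ubar k‖ / ‖F (u k) - F (ubar k)‖))
    (hu : ∀ k : ℕ, u k = ubar k - a k • F (ubar k))
    (hubar : ∀ k : ℕ, ubar (k + 1) = ubar k - (a k * γ) • F (u k)) :
    ∃ ainf : ℝ, Filter.Tendsto a Filter.atTop (nhds ainf) ∧
      min (a 0) (τ / L) ≤ ainf ∧ 0 < min (a 0) (τ / L) ∧
      ∃ k₀ : ℕ, ∀ k : ℕ, k ≥ k₀ → a k ≤ a (k + 1) / τ := by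
  set m : ℝ := min (a 0) (τ / L) with hm
  have hm0 : 0 < m := lt_min ha0 (div_pos hτ0 hL)
  -- key step bound
  have hkey : ∀ k, min (a k) (τ / L) ≤ a (k + 1) ∧ a (k + 1) ≤ a k := by
    intro k
    by_cases hF : F (u k) = F (ubar k)
    · rw [hstep_eq k hF]
      exact ⟨min_le_left _ _, le_refl _⟩
    · rw [hstep_ne k hF]
      have hFn : 0 < ‖F (u k) - F (ubar k)‖ := by
        rw [norm_pos_iff, sub_ne_zero]; exact hF
      have hτL : τ / L ≤ τ * ‖u k - ubar k‖ / ‖F (u k) - F (ubar k)‖ := by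
        rw [div_le_div_iff₀ hL hFn]
        calc τ * ‖F (u k) - F (ubar k)‖ ≤ τ * (L * ‖u k - ubar k‖) := by
              exact mul_le_mul_of_nonneg_left (hLip _ _) hτ0.le
          _ = τ * ‖u k - ubar k‖ * L := by ring
      exact ⟨min_le_min (le_refl _) hτL, min_le_left _ _⟩
  have hanti : ∀ k, a (k + 1) ≤ a k := fun k => (hkey k).2
  have hAnti : Antitone a := antitone_nat_of_succ_le hanti
  have hlb : ∀ k, m ≤ a k := by
    intro k
    induction k with
    | zero => exact min_le_left _ _
    | succ n ih =>
      refine le_trans ?_ (hkey n).1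
      exact le_min (le_trans (le_min ih (min_le_right _ _)) (min_le_left _ _))
        (min_le_right _ _)
  have hbdd : BddBelow (Set.range a) := ⟨m, by rintro x ⟨k, rfl⟩; exact hlb k⟩
  have htend : Filter.Tendsto a Filter.atTop (nhds (⨅ k, a k)) :=
    tendsto_atTop_ciInf hAnti hbdd
  set ainf : ℝ := ⨅ k, a k with hainf
  have hainf_lb : m ≤ ainf := le_ciInf hlb
  have hainf_le : ∀ k, ainf ≤ a k := fun k => ciInf_le hbdd k
  refine ⟨ainf, htend, hainf_lb, hm0, ?_⟩
  have hainf0 : 0 < ainf := lt_of_lt_of_le hm0 hainf_lb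
  have hlt : ainf < ainf / τ := by
    rw [lt_div_iff₀ hτ0]
    nlinarith
  have hev : ∀ᶠ k in Filter.atTop, a k < ainf / τ :=
    htend.eventually (eventually_lt_nhds hlt)
  obtain ⟨k₀, hk₀⟩ := Filter.eventually_atTop.mp hev
  refine ⟨k₀, fun k hk => ?_⟩
  have h1 : a k ≤ ainf / τ := (hk₀ k hk).le
  have h2 : ainf / τ ≤ a (k + 1) / τ :=
    by gcongr; exact hainf_le (k+1)
  exact h1.trans h2
end

section
/- Let F : ℝ^d → ℝ^d have a weak Minty solution u* with parameter ρ > 0, and let (u_k, ū_k, a_k) be generated by the adaptive EG+ method with parameters τ ∈ (0,1), 0 < γ ≤ 1, starting point ū₀ and initial step size a₀ > 0. If k₀ ≤ k are indices such that a_i ≤ a_{i+1}/τ for all i with k₀ ≤ i ≤ k, then (1/γ)·‖ū_{k+1} − u*‖² + Σ_{i=k₀}^{k} a_i·(a_i·γ·(1 − γ) − ρ)·‖F(u_i)‖² ≤ (1/γ)·‖ū_{k₀} − u*‖². -/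
open scoped RealInnerProductSpace

theorem adaptive_eg_plus_telescoped (d : ℕ)
    (F : EuclideanSpace ℝ (Fin d) → EuclideanSpace ℝ (Fin d))
    (ρ τ γ : ℝ) (ustar : EuclideanSpace ℝ (Fin d))
    (hρ : 0 < ρ)
    (hweak : ∀ u, ⟪F u, u - ustar⟫ ≥ -(ρ / 2) * ‖F u‖ ^ 2)
    (hτ0 : 0 < τ) (hτ1 : τ < 1) (hγ0 : 0 < γ) (hγ1 : γ ≤ 1)
    (u ubar : ℕ → EuclideanSpace ℝ (Fin d)) (a : ℕ → ℝ)
    (ha0 : 0 < a 0)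
    (hstep_eq : ∀ k : ℕ, F (u k) = F (ubar k) → a (k + 1) = a k)
    (hstep_ne : ∀ k : ℕ, F (u k) ≠ F (ubar k) →
      a (k + 1) = min (a k) (τ * ‖u k - ubar k‖ / ‖F (u k) - F (ubar k)‖))
    (hu : ∀ k : ℕ, u k = ubar k - a k • F (ubar k))
    (hubar : ∀ k : ℕ, ubar (k + 1) = ubar k - (a k * γ) • F (u k))
    (k₀ k : ℕ) (hk : k₀ ≤ k)
    (hratio : ∀ i : ℕ, k₀ ≤ i → i ≤ k → a i ≤ a (i + 1) / τ) :
    (1 / γ) * ‖ubar (k + 1) - ustar‖ ^ 2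
        + ∑ i ∈ Finset.Icc k₀ k, a i * (a i * γ * (1 - γ) - ρ) * ‖F (u i)‖ ^ 2
      ≤ (1 / γ) * ‖ubar k₀ - ustar‖ ^ 2 := by
  have hγinv : (0:ℝ) < 1 / γ := by positivity
  -- positivity of step sizes
  have hapos : ∀ i, 0 < a i := by
    intro i
    induction i with
    | zero => exact ha0
    | succ n ih =>
      by_cases h : F (u n) = F (ubar n)
      · rw [hstep_eq n h]; exact ih
      · rw [hstep_ne n h]
        refine lt_min ih (div_pos (mul_pos hτ0 ?_) ?_)
        · rw [norm_pos_iff, sub_ne_zero]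
          intro hz
          exact h (by rw [hz])
        · rw [norm_pos_iff, sub_ne_zero]; exact h
  -- one-step inequality
  have onestep : ∀ i : ℕ, a i ≤ a (i + 1) / τ →
      (1 / γ) * ‖ubar (i + 1) - ustar‖ ^ 2
        + a i * (a i * γ * (1 - γ) - ρ) * ‖F (u i)‖ ^ 2
      ≤ (1 / γ) * ‖ubar i - ustar‖ ^ 2 := by
    intro i hrat
    have hai := hapos i
    have hai1 := hapos (i + 1)
    have hτa : a i * τ ≤ a (i + 1) := (le_div_iff₀ hτ0).mp hrat
    -- bound on the operator difference
    have hAB : ‖F (u i) - F (ubar i)‖ ≤ ‖F (ubar i)‖ := by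
      by_cases h : F (u i) = F (ubar i)
      · simp [h]
      · have h1 : a (i + 1) ≤ τ * ‖u i - ubar i‖ / ‖F (u i) - F (ubar i)‖ := by
          rw [hstep_ne i h]; exact min_le_right _ _
        have hd : 0 < ‖F (u i) - F (ubar i)‖ := by
          rw [norm_pos_iff, sub_ne_zero]; exact h
        rw [le_div_iff₀ hd] at h1
        have hnu : ‖u i - ubar i‖ = a i * ‖F (ubar i)‖ := by
          rw [hu i, sub_sub_cancel_left, norm_neg, norm_smul, Real.norm_eq_abs,
            abs_of_pos hai]
        rw [hnu] at h1
        have h2 : a (i + 1) * ‖F (u i) - F (ubar i)‖ ≤ a (i + 1) * ‖F (ubar i)‖ := by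
          nlinarith [norm_nonneg (F (ubar i))]
        exact le_of_mul_le_mul_left h2 hai1
    have hABsq : ‖F (u i) - F (ubar i)‖ ^ 2 ≤ ‖F (ubar i)‖ ^ 2 :=
      pow_le_pow_left₀ (norm_nonneg _) hAB 2
    have hpoly : ‖F (u i) - F (ubar i)‖ ^ 2
        = ‖F (u i)‖ ^ 2 - 2 * ⟪F (u i), F (ubar i)⟫ + ‖F (ubar i)‖ ^ 2 :=
      norm_sub_sq_real _ _
    have hABinner : ‖F (u i)‖ ^ 2 / 2 ≤ ⟪F (u i), F (ubar i)⟫ := by linarith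
    -- inner product decomposition
    have hxdec : ubar i - ustar = (u i - ustar) + a i • F (ubar i) := by
      rw [hu i]; abel
    have hinner : ⟪F (u i), ubar i - ustar⟫
        = ⟪F (u i), u i - ustar⟫ + a i * ⟪F (u i), F (ubar i)⟫ := by
      rw [hxdec, inner_add_right, real_inner_smul_right]
    have hIb : (a i / 2 - ρ / 2) * ‖F (u i)‖ ^ 2 ≤ ⟪F (u i), ubar i - ustar⟫ := by
      have h1 := hweak (u i)
      have h2 : a i * (‖F (u i)‖ ^ 2 / 2) ≤ a i * ⟪F (u i), F (ubar i)⟫ :=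
        mul_le_mul_of_nonneg_left hABinner hai.le
      rw [hinner]; nlinarith
    -- expansion of the squared norm
    have hx : ubar (i + 1) - ustar = (ubar i - ustar) - (a i * γ) • F (u i) := by
      rw [hubar i, sub_right_comm]
    have hexp : ‖ubar (i + 1) - ustar‖ ^ 2
        = ‖ubar i - ustar‖ ^ 2 - 2 * (a i * γ) * ⟪F (u i), ubar i - ustar⟫
          + (a i * γ) ^ 2 * ‖F (u i)‖ ^ 2 := by
      rw [hx, norm_sub_sq_real, real_inner_smul_right, norm_smul, Real.norm_eq_abs,
        abs_of_pos (mul_pos hai hγ0), real_inner_comm, mul_pow]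
      ring
    have key : ‖ubar (i + 1) - ustar‖ ^ 2
        + γ * (a i * (a i * γ * (1 - γ) - ρ) * ‖F (u i)‖ ^ 2)
        ≤ ‖ubar i - ustar‖ ^ 2 := by
      have hmul : 2 * (a i * γ) * ((a i / 2 - ρ / 2) * ‖F (u i)‖ ^ 2)
          ≤ 2 * (a i * γ) * ⟪F (u i), ubar i - ustar⟫ :=
        mul_le_mul_of_nonneg_left hIb (by positivity)
      have h4 : 0 ≤ a i ^ 2 * γ * (1 - γ) ^ 2 * ‖F (u i)‖ ^ 2 := by positivity
      nlinarith [hexp, hmul, h4]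
    calc (1 / γ) * ‖ubar (i + 1) - ustar‖ ^ 2
          + a i * (a i * γ * (1 - γ) - ρ) * ‖F (u i)‖ ^ 2
        = (1 / γ) * (‖ubar (i + 1) - ustar‖ ^ 2
            + γ * (a i * (a i * γ * (1 - γ) - ρ) * ‖F (u i)‖ ^ 2)) := by
          field_simp
      _ ≤ (1 / γ) * ‖ubar i - ustar‖ ^ 2 :=
          mul_le_mul_of_nonneg_left key hγinv.le
  -- telescoping
  have main : ∀ m : ℕ, k₀ ≤ m → (∀ i : ℕ, k₀ ≤ i → i ≤ m → a i ≤ a (i + 1) / τ) →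
      (1 / γ) * ‖ubar (m + 1) - ustar‖ ^ 2
        + ∑ i ∈ Finset.Icc k₀ m, a i * (a i * γ * (1 - γ) - ρ) * ‖F (u i)‖ ^ 2
      ≤ (1 / γ) * ‖ubar k₀ - ustar‖ ^ 2 := by
    intro m
    induction m with
    | zero =>
      intro h0 hr
      have hz : k₀ = 0 := Nat.le_zero.mp h0
      subst hz
      simpa [Finset.Icc_self] using onestep 0 (hr 0 le_rfl le_rfl)
    | succ n ih =>
      intro hn hr
      rcases Nat.lt_or_ge n k₀ with hlt | hge
      · have heq : k₀ = n + 1 := le_antisymm hn hlt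
        subst heq
        simpa [Finset.Icc_self] using onestep (n + 1) (hr (n + 1) le_rfl le_rfl)
      · have hsplit := Finset.sum_Icc_succ_top (Nat.le_succ_of_le hge)
          (fun i => a i * (a i * γ * (1 - γ) - ρ) * ‖F (u i)‖ ^ 2)
        rw [hsplit]
        have hih := ih hge (fun i h1 h2 => hr i h1 (Nat.le_succ_of_le h2))
        have hone := onestep (n + 1) (hr (n + 1) (Nat.le_succ_of_le hge) le_rfl)
        linarith
  exact main k hk hratio
end
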